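/- Suppose real numbers a, b, K₁, K₂, K₃, K₄, p₁, p₂, h, θ satisfy the full system a·cos θ − K₁ − K₄·p₁ = 0, a·sin θ + K₄·p₂ = −h, b·cos θ − K₂ − K₃·p₁ = 0, b·sin θ − K₃·p₂ = −h, together with the normalization p₁² + p₂² = 1, and assume a·K₃ ≠ b·K₄. Then p₂²·(a·K₃ − b·K₄)² = (a·K₃ − b·K₄)² − (b·K₁ − a·K₂)²; in particular (b·K₁ − a·K₂)² ≤ (a·K₃ − b·K₄)². -/
import Mathlib

theorem stmt_3 (a b K₁ K₂ K₃ K₄ p₁ p₂ h θ : ℝ)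
    (h1 : a * Real.cos θ - K₁ - K₄ * p₁ = 0)
    (h2 : a * Real.sin θ + K₄ * p₂ = -h)
    (h3 : b * Real.cos θ - K₂ - K₃ * p₁ = 0)
    (h4 : b * Real.sin θ - K₃ * p₂ = -h)
    (hnorm : p₁ ^ 2 + p₂ ^ 2 = 1)
    (hne : a * K₃ ≠ b * K₄) :
    p₂ ^ 2 * (a * K₃ - b * K₄) ^ 2 = (a * K₃ - b * K₄) ^ 2 - (b * K₁ - a * K₂) ^ 2 ∧
    (b * K₁ - a * K₂) ^ 2 ≤ (a * K₃ - b * K₄) ^ 2 := by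
  have key : p₁ * (a * K₃ - b * K₄) = b * K₁ - a * K₂ := by linear_combination b * h1 - a * h3
  have e1 : p₂ ^ 2 * (a * K₃ - b * K₄) ^ 2 = (a * K₃ - b * K₄) ^ 2 - (b * K₁ - a * K₂) ^ 2 := by
    linear_combination (a * K₃ - b * K₄) ^ 2 * hnorm - (p₁ * (a * K₃ - b * K₄) + (b * K₁ - a * K₂)) * key
  exact ⟨e1, by nlinarith [mul_nonneg (sq_nonneg p₂) (sq_nonneg (a * K₃ - b * K₄))]⟩
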